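/- For all r > 0 and μ ≥ ν > 0, the inequality (S_ν(r)/ζ(2ν+1))^{1/(ν+1)} ≥ (S_μ(r)/ζ(2μ+1))^{1/(μ+1)} holds. -/

import Mathlib

open Real

noncomputable def mathieuS (μ r : ℝ) : ℝ :=
  ∑' n : ℕ, (2 * ((n : ℝ) + 1)) / ((((n : ℝ) + 1) ^ 2 + r ^ 2) ^ (μ + 1))

noncomputable def zetaR (s : ℝ) : ℝ := ∑' n : ℕ, ((n : ℝ) + 1) ^ (-s)

namespace Stmt5Aux

noncomputable def Nf (s c : ℝ) : ℝ :=
  ∑' n : ℕ, ((n : ℝ) + 1) * ((((n : ℝ) + 1) ^ 2 + c) ^ (-s))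

lemma K_pos (n : ℕ) : (0:ℝ) < (n:ℝ) + 1 := by positivity

lemma one_le_Ksq (n : ℕ) : (1:ℝ) ≤ ((n:ℝ)+1)^2 := by
  nlinarith [Nat.cast_nonneg (α := ℝ) n]

lemma X_pos (n : ℕ) {c : ℝ} (hc : -1/2 < c) : 0 < ((n:ℝ)+1)^2 + c := by
  nlinarith [one_le_Ksq n]

lemma half_le_X (n : ℕ) {c : ℝ} (hc : -1/2 < c) : ((n:ℝ)+1)^2/2 ≤ ((n:ℝ)+1)^2 + c := by
  nlinarith [one_le_Ksq n]

lemma summable_shift {p : ℝ} (hp : p < -1) : Summable (fun n : ℕ => ((n:ℝ)+1) ^ p) := by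
  have h : Summable (fun n : ℕ => ((n+1 : ℕ):ℝ) ^ p) :=
    (summable_nat_add_iff 1).2 (Real.summable_nat_rpow.2 hp)
  exact h.congr (fun n => by push_cast; rfl)

lemma term_le {s c : ℝ} (hs : 0 < s) (hc : -1/2 < c) (n : ℕ) :
    ((n:ℝ)+1) * ((((n:ℝ)+1)^2 + c) ^ (-s)) ≤ 2 ^ s * (((n:ℝ)+1) ^ (1 - 2*s)) := by
  have hK0 : (0:ℝ) < (n:ℝ)+1 := K_pos n
  have h1 : ((n:ℝ)+1)^2/2 ≤ ((n:ℝ)+1)^2 + c := half_le_X n hc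
  have h2 : (((n:ℝ)+1)^2+c) ^ (-s) ≤ (((n:ℝ)+1)^2/2) ^ (-s) :=
    rpow_le_rpow_of_nonpos (by positivity) h1 (by linarith)
  have h3 : ((((n:ℝ)+1)^2 : ℝ)/2) ^ (-s) = 2 ^ s * ((((n:ℝ)+1)^2 : ℝ)) ^ (-s) := by
    rw [Real.div_rpow (by positivity) (by norm_num), Real.rpow_neg (by norm_num : (0:ℝ) ≤ 2),
      div_eq_mul_inv, inv_inv, mul_comm]
  have h4 : ((((n:ℝ)+1)^2 : ℝ)) ^ (-s) = ((n:ℝ)+1) ^ (-(2*s)) := by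
    rw [← Real.rpow_natCast ((n:ℝ)+1) 2, ← Real.rpow_mul hK0.le]
    norm_num
  have h5 : ((n:ℝ)+1) ^ (1 - 2*s) = ((n:ℝ)+1) * (((n:ℝ)+1) ^ (-(2*s))) := by
    rw [show (1 - 2*s : ℝ) = 1 + (-(2*s)) by ring, Real.rpow_add hK0, Real.rpow_one]
  calc ((n:ℝ)+1) * ((((n:ℝ)+1)^2 + c) ^ (-s))
      ≤ ((n:ℝ)+1) * ((((n:ℝ)+1)^2/2) ^ (-s)) := by
        exact mul_le_mul_of_nonneg_left h2 hK0.le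
    _ = 2 ^ s * (((n:ℝ)+1) ^ (1 - 2*s)) := by rw [h3, h4, h5]; ring

lemma summable_Nf {s c : ℝ} (hs : 1 < s) (hc : -1/2 < c) :
    Summable (fun n : ℕ => ((n:ℝ)+1) * ((((n:ℝ)+1)^2 + c) ^ (-s))) := by
  apply Summable.of_nonneg_of_le
    (fun n => mul_nonneg (K_pos n).le (Real.rpow_nonneg (X_pos n hc).le _))
    (fun n => term_le (by linarith) hc n)
  exact (summable_shift (by linarith : (1 - 2*s : ℝ) < -1)).mul_left _

lemma Nf_pos {s c : ℝ} (hs : 1 < s) (hc : -1/2 < c) : 0 < Nf s c :=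
  Summable.tsum_pos (summable_Nf hs hc)
    (fun n => mul_nonneg (K_pos n).le (Real.rpow_nonneg (X_pos n hc).le _)) 0
    (mul_pos (K_pos 0) (Real.rpow_pos_of_pos (X_pos 0 hc) _))

lemma hasDerivAt_Nf {s : ℝ} (hs : 1 < s) {c : ℝ} (hc : -1/2 < c) :
    HasDerivAt (fun x => Nf s x) (-s * Nf (s+1) c) c := by
  have hs0 : (0:ℝ) < s := by linarith
  have key := hasDerivAt_tsum_of_isPreconnected
    (u := fun n : ℕ => s * (2 ^ (s+1) * (((n:ℝ)+1) ^ (1 - 2*(s+1)))))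
    (g := fun (n : ℕ) (x : ℝ) => ((n:ℝ)+1) * ((((n:ℝ)+1)^2 + x) ^ (-s)))
    (g' := fun (n : ℕ) (x : ℝ) => -s * (((n:ℝ)+1) * ((((n:ℝ)+1)^2 + x) ^ (-(s+1)))))
    (y₀ := c) (y := c)
    ?_ isOpen_Ioi (convex_Ioi (-1/2:ℝ)).isPreconnected ?_ ?_ (Set.mem_Ioi.2 hc) ?_
    (Set.mem_Ioi.2 hc)
  · have e : ∑' n : ℕ, (-s * (((n:ℝ)+1) * ((((n:ℝ)+1)^2 + c) ^ (-(s+1)))))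
        = -s * Nf (s+1) c := tsum_mul_left
    rw [e] at key
    exact key
  · exact ((summable_shift (by linarith : (1 - 2*(s+1) : ℝ) < -1)).mul_left _).mul_left s
  · intro n y hy
    have hX : 0 < ((n:ℝ)+1)^2 + y := X_pos n (Set.mem_Ioi.1 hy)
    have h0 : HasDerivAt (fun x : ℝ => ((n:ℝ)+1)^2 + x) 1 y := (hasDerivAt_id y).const_add _
    have h1 := h0.rpow_const (p := -s) (Or.inl hX.ne')
    have h2 := h1.const_mul ((n:ℝ)+1)
    refine h2.congr_deriv ?_
    rw [show (-(s+1) : ℝ) = -s - 1 by ring]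
    ring
  · intro n y hy
    have hX : 0 < ((n:ℝ)+1)^2 + y := X_pos n (Set.mem_Ioi.1 hy)
    have hb := term_le (s := s+1) (by linarith) (Set.mem_Ioi.1 hy) n
    have hnn : 0 ≤ ((n:ℝ)+1) * ((((n:ℝ)+1)^2 + y) ^ (-(s+1))) :=
      mul_nonneg (K_pos n).le (Real.rpow_nonneg hX.le _)
    rw [norm_mul, Real.norm_eq_abs, Real.norm_eq_abs, abs_neg, abs_of_pos hs0,
      abs_of_nonneg hnn]
    exact mul_le_mul_of_nonneg_left hb hs0.le
  · exact summable_Nf hs hc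

set_option maxHeartbeats 2000000 in
lemma corr {p q g : ℕ → ℝ} (hp : Summable p) (hq : Summable q)
    (hpg : Summable (fun n => p n * g n)) (hqg : Summable (fun n => q n * g n))
    (hp0 : ∀ n, 0 ≤ p n) (hq0 : ∀ n, 0 ≤ q n)
    (hpg0 : ∀ n, 0 ≤ p n * g n) (hqg0 : ∀ n, 0 ≤ q n * g n)
    (hsign : ∀ m n : ℕ, 0 ≤ (p m * q n - p n * q m) * (g m - g n)) :
    (∑' n, q n * g n) * (∑' n, p n) ≤ (∑' n, p n * g n) * (∑' n, q n) := by
  have hA : Summable (fun x : ℕ × ℕ => (p x.1 * g x.1) * q x.2) :=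
    hpg.mul_of_nonneg hq (Pi.le_def.mpr hpg0) (Pi.le_def.mpr hq0)
  have hB : Summable (fun x : ℕ × ℕ => p x.1 * (q x.2 * g x.2)) :=
    hp.mul_of_nonneg hqg (Pi.le_def.mpr hp0) (Pi.le_def.mpr hqg0)
  have hC : Summable (fun x : ℕ × ℕ => (q x.1 * g x.1) * p x.2) :=
    hqg.mul_of_nonneg hp (Pi.le_def.mpr hqg0) (Pi.le_def.mpr hp0)
  have hD : Summable (fun x : ℕ × ℕ => q x.1 * (p x.2 * g x.2)) :=
    hq.mul_of_nonneg hpg (Pi.le_def.mpr hq0) (Pi.le_def.mpr hpg0)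
  have eA := Summable.tsum_mul_tsum hpg hq hA
  have eB := Summable.tsum_mul_tsum hp hqg hB
  have eC := Summable.tsum_mul_tsum hqg hp hC
  have eD := Summable.tsum_mul_tsum hq hpg hD
  have hnn : 0 ≤ ∑' x : ℕ × ℕ, (p x.1 * q x.2 - p x.2 * q x.1) * (g x.1 - g x.2) :=
    tsum_nonneg (fun x => hsign x.1 x.2)
  have expand : ∑' x : ℕ × ℕ, (p x.1 * q x.2 - p x.2 * q x.1) * (g x.1 - g x.2)
      = ((∑' x : ℕ × ℕ, (p x.1 * g x.1) * q x.2) - (∑' x : ℕ × ℕ, p x.1 * (q x.2 * g x.2))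
        - (∑' x : ℕ × ℕ, (q x.1 * g x.1) * p x.2)) + (∑' x : ℕ × ℕ, q x.1 * (p x.2 * g x.2)) := by
    rw [← Summable.tsum_sub hA hB, ← Summable.tsum_sub (hA.sub hB) hC, ← Summable.tsum_add ((hA.sub hB).sub hC) hD]
    exact tsum_congr (fun x => by ring)
  rw [expand, ← eA, ← eB, ← eC, ← eD] at hnn
  have c1 : (∑' n, p n) * (∑' n, q n * g n) = (∑' n, q n * g n) * (∑' n, p n) := mul_comm _ _
  have c2 : (∑' n, q n) * (∑' n, p n * g n) = (∑' n, p n * g n) * (∑' n, q n) := mul_comm _ _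
  linarith [hnn, c1, c2]

lemma Nf_corr {a b c : ℝ} (ha : 1 < a) (hab : a ≤ b) (hc : -1/2 < c) :
    Nf (a+1) c * Nf b c ≤ Nf (b+1) c * Nf a c := by
  have hb : 1 < b := lt_of_lt_of_le ha hab
  set p := fun n : ℕ => ((n:ℝ)+1) * ((((n:ℝ)+1)^2 + c) ^ (-b)) with hpdef
  set q := fun n : ℕ => ((n:ℝ)+1) * ((((n:ℝ)+1)^2 + c) ^ (-a)) with hqdef
  set g := fun n : ℕ => ((((n:ℝ)+1)^2 + c))⁻¹ with hgdef
  have hXpos : ∀ n : ℕ, 0 < ((n:ℝ)+1)^2 + c := fun n => X_pos n hc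
  have hpg : ∀ n, p n * g n = ((n:ℝ)+1) * ((((n:ℝ)+1)^2 + c) ^ (-(b+1))) := by
    intro n
    rw [show (-(b+1) : ℝ) = -b + -1 by ring, Real.rpow_add (hXpos n), Real.rpow_neg_one]
    simp only [hpdef, hgdef]
    ring
  have hqg : ∀ n, q n * g n = ((n:ℝ)+1) * ((((n:ℝ)+1)^2 + c) ^ (-(a+1))) := by
    intro n
    rw [show (-(a+1) : ℝ) = -a + -1 by ring, Real.rpow_add (hXpos n), Real.rpow_neg_one]
    simp only [hqdef, hgdef]
    ring
  have hp : Summable p := summable_Nf hb hc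
  have hq : Summable q := summable_Nf ha hc
  have hpgs : Summable (fun n => p n * g n) :=
    (summable_Nf (by linarith : (1:ℝ) < b + 1) hc).congr (fun n => (hpg n).symm)
  have hqgs : Summable (fun n => q n * g n) :=
    (summable_Nf (by linarith : (1:ℝ) < a + 1) hc).congr (fun n => (hqg n).symm)
  have hp0 : ∀ n, 0 ≤ p n := fun n =>
    mul_nonneg (K_pos n).le (Real.rpow_nonneg (hXpos n).le _)
  have hq0 : ∀ n, 0 ≤ q n := fun n =>
    mul_nonneg (K_pos n).le (Real.rpow_nonneg (hXpos n).le _)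
  have hpg0 : ∀ n, 0 ≤ p n * g n := fun n => by
    rw [hpg n]; exact mul_nonneg (K_pos n).le (Real.rpow_nonneg (hXpos n).le _)
  have hqg0 : ∀ n, 0 ≤ q n * g n := fun n => by
    rw [hqg n]; exact mul_nonneg (K_pos n).le (Real.rpow_nonneg (hXpos n).le _)
  have mono : ∀ m n : ℕ, m ≤ n → p n * q m ≤ p m * q n ∧ g n ≤ g m := by
    intro m n hmn
    have hm : (0:ℝ) < ((m:ℝ)+1)^2 + c := hXpos m
    have hn : (0:ℝ) < ((n:ℝ)+1)^2 + c := hXpos n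
    have hKle : ((m:ℝ)+1) ≤ ((n:ℝ)+1) := by
      have : (m:ℝ) ≤ (n:ℝ) := Nat.cast_le.2 hmn
      linarith
    have hXle : ((m:ℝ)+1)^2 + c ≤ ((n:ℝ)+1)^2 + c := by nlinarith [K_pos m]
    constructor
    · have e1 : ∀ x : ℝ, 0 < x → x ^ (-b) = x ^ (-a) * x ^ (a - b) := by
        intro x hx
        rw [← Real.rpow_add hx]
        congr 1
        ring
      have h2 : (((n:ℝ)+1)^2 + c) ^ (a-b) ≤ (((m:ℝ)+1)^2 + c) ^ (a-b) :=
        rpow_le_rpow_of_nonpos hm hXle (by linarith)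
      calc p n * q m
          = (((n:ℝ)+1)*(((m:ℝ)+1)) * (((((m:ℝ)+1)^2+c)^(-a)) * ((((n:ℝ)+1)^2+c)^(-a))))
            * ((((n:ℝ)+1)^2+c)^(a-b)) := by
            simp only [hpdef, hqdef]
            rw [e1 _ hn]
            ring
        _ ≤ (((n:ℝ)+1)*(((m:ℝ)+1)) * (((((m:ℝ)+1)^2+c)^(-a)) * ((((n:ℝ)+1)^2+c)^(-a))))
            * ((((m:ℝ)+1)^2+c)^(a-b)) := by
            apply mul_le_mul_of_nonneg_left h2
            have := K_pos m
            have := K_pos n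
            positivity
        _ = p m * q n := by
            simp only [hpdef, hqdef]
            rw [e1 _ hm]
            ring
    · exact inv_anti₀ hm hXle
  have hsign : ∀ m n : ℕ, 0 ≤ (p m * q n - p n * q m) * (g m - g n) := by
    intro m n
    rcases le_total m n with h | h
    · obtain ⟨h1, h2⟩ := mono m n h
      exact mul_nonneg (by linarith) (by linarith)
    · obtain ⟨h1, h2⟩ := mono n m h
      have hprod : 0 ≤ (p n * q m - p m * q n) * (g n - g m) :=
        mul_nonneg (by linarith) (by linarith)
      linear_combination hprod
  have main := corr hp hq hpgs hqgs hp0 hq0 hpg0 hqg0 hsign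
  have e1 : Nf (b+1) c = ∑' n, p n * g n := tsum_congr (fun n => (hpg n).symm)
  have e2 : Nf (a+1) c = ∑' n, q n * g n := tsum_congr (fun n => (hqg n).symm)
  have e3 : Nf b c = ∑' n, p n := rfl
  have e4 : Nf a c = ∑' n, q n := rfl
  rw [e1, e2, e3, e4]
  exact main

lemma key_ineq {a b R : ℝ} (ha : 1 < a) (hab : a ≤ b) (hR : 0 < R) :
    Real.log (Nf b R) - (b/a) * Real.log (Nf a R)
      ≤ Real.log (Nf b 0) - (b/a) * Real.log (Nf a 0) := by
  have hb : 1 < b := lt_of_lt_of_le ha hab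
  have ha0 : (0:ℝ) < a := by linarith
  have hb0 : (0:ℝ) < b := by linarith
  have hL : ∀ x : ℝ, -1/2 < x →
      HasDerivAt (fun y => Real.log (Nf b y) - (b/a) * Real.log (Nf a y))
        ((-b * Nf (b+1) x) / Nf b x - (b/a) * ((-a * Nf (a+1) x) / Nf a x)) x := by
    intro x hx
    have h1 := (hasDerivAt_Nf hb hx).log (Nf_pos hb hx).ne'
    have h2 := ((hasDerivAt_Nf ha hx).log (Nf_pos ha hx).ne').const_mul (b/a)
    exact h1.sub h2
  have anti : AntitoneOn (fun y => Real.log (Nf b y) - (b/a) * Real.log (Nf a y))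
      (Set.Icc 0 R) := by
    apply antitoneOn_of_deriv_nonpos (convex_Icc 0 R)
    · intro x hx
      exact ((hL x (by simp at hx; linarith [hx.1])).continuousAt).continuousWithinAt
    · intro x hx
      rw [interior_Icc] at hx
      exact ((hL x (by linarith [hx.1])).differentiableAt).differentiableWithinAt
    · intro x hx
      rw [interior_Icc] at hx
      have hx' : (-1/2 : ℝ) < x := by linarith [hx.1]
      rw [(hL x hx').deriv]
      have hNb := Nf_pos hb hx'
      have hNa := Nf_pos ha hx'
      have hcorr := Nf_corr ha hab hx'
      have h5 : Nf (a+1) x / Nf a x ≤ Nf (b+1) x / Nf b x :=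
        (div_le_div_iff₀ hNa hNb).2 (by linarith [hcorr])
      have e : (-b * Nf (b+1) x) / Nf b x - (b/a) * ((-a * Nf (a+1) x) / Nf a x)
          = b * (Nf (a+1) x / Nf a x - Nf (b+1) x / Nf b x) := by
        field_simp
        ring
      rw [e]
      nlinarith [h5, hb0]
  have h0m : (0:ℝ) ∈ Set.Icc (0:ℝ) R := Set.left_mem_Icc.2 hR.le
  have hRm : R ∈ Set.Icc (0:ℝ) R := Set.right_mem_Icc.2 hR.le
  exact anti h0m hRm hR.le

end Stmt5Aux

open Stmt5Aux in
theorem stmt5 (r μ ν : ℝ) (hr : 0 < r) (hν : 0 < ν) (hμν : ν ≤ μ) :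
    (mathieuS ν r / zetaR (2 * ν + 1)) ^ (1 / (ν + 1)) ≥
      (mathieuS μ r / zetaR (2 * μ + 1)) ^ (1 / (μ + 1)) := by
  have hz : ∀ s : ℝ, zetaR (2*s+1) = Nf (s+1) 0 := by
    intro s
    unfold zetaR Nf
    apply tsum_congr
    intro n
    have hK : (0:ℝ) < (n:ℝ)+1 := K_pos n
    have e : ((n:ℝ)+1) * ((((n:ℝ)+1)^2 + 0) ^ (-(s+1))) = ((n:ℝ)+1) ^ (-(2*s+1)) := by
      rw [add_zero, ← Real.rpow_natCast ((n:ℝ)+1) 2, ← Real.rpow_mul hK.le]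
      rw [show ((2:ℕ):ℝ) * -(s+1) = -(2*s+1) + (-1) by push_cast; ring]
      rw [Real.rpow_add hK, Real.rpow_neg_one]
      field_simp
    exact e.symm
  have hm : ∀ s : ℝ, mathieuS s r = 2 * Nf (s+1) (r^2) := by
    intro s
    unfold mathieuS Nf
    rw [← tsum_mul_left]
    apply tsum_congr
    intro n
    have hX : (0:ℝ) < ((n:ℝ)+1)^2 + r^2 := X_pos n (by nlinarith [sq_nonneg r])
    rw [Real.rpow_neg hX.le, div_eq_mul_inv]
    ring
  rw [ge_iff_le, hz, hz, hm, hm]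
  have ha : (1:ℝ) < ν + 1 := by linarith
  have hb : (1:ℝ) < μ + 1 := by linarith
  have hab : ν + 1 ≤ μ + 1 := by linarith
  have ha0 : (0:ℝ) < ν + 1 := by linarith
  have hb0 : (0:ℝ) < μ + 1 := by linarith
  have hc0 : (-1/2 : ℝ) < 0 := by norm_num
  have hcR : (-1/2 : ℝ) < r^2 := by nlinarith [sq_nonneg r]
  have hR2 : (0:ℝ) < r^2 := by positivity
  have hNb0 := Nf_pos hb hc0
  have hNbR := Nf_pos hb hcR
  have hNa0 := Nf_pos ha hc0
  have hNaR := Nf_pos ha hcR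
  have key := key_ineq ha hab hR2
  have hxb : 0 < 2 * Nf (μ+1) (r^2) / Nf (μ+1) 0 := div_pos (by linarith) hNb0
  have hxa : 0 < 2 * Nf (ν+1) (r^2) / Nf (ν+1) 0 := div_pos (by linarith) hNa0
  rw [Real.rpow_def_of_pos hxb, Real.rpow_def_of_pos hxa, Real.exp_le_exp]
  have lb : Real.log (2 * Nf (μ+1) (r^2) / Nf (μ+1) 0)
      = Real.log 2 + Real.log (Nf (μ+1) (r^2)) - Real.log (Nf (μ+1) 0) := by
    rw [Real.log_div (by positivity) hNb0.ne', Real.log_mul two_ne_zero hNbR.ne']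
  have la : Real.log (2 * Nf (ν+1) (r^2) / Nf (ν+1) 0)
      = Real.log 2 + Real.log (Nf (ν+1) (r^2)) - Real.log (Nf (ν+1) 0) := by
    rw [Real.log_div (by positivity) hNa0.ne', Real.log_mul two_ne_zero hNaR.ne']
  rw [lb, la, mul_one_div, mul_one_div, div_le_div_iff₀ hb0 ha0]
  have h2 : (0:ℝ) ≤ Real.log 2 := Real.log_nonneg one_le_two
  have key2 : Real.log (Nf (μ+1) (r^2)) - Real.log (Nf (μ+1) 0)
      ≤ ((μ+1)/(ν+1)) * (Real.log (Nf (ν+1) (r^2)) - Real.log (Nf (ν+1) 0)) := by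
    have := key
    ring_nf at this ⊢
    linarith [this]
  have key3 : (ν+1) * (Real.log (Nf (μ+1) (r^2)) - Real.log (Nf (μ+1) 0))
      ≤ (μ+1) * (Real.log (Nf (ν+1) (r^2)) - Real.log (Nf (ν+1) 0)) := by
    have h := mul_le_mul_of_nonneg_left key2 ha0.le
    have e : (ν+1) * (((μ+1)/(ν+1)) * (Real.log (Nf (ν+1) (r^2)) - Real.log (Nf (ν+1) 0)))
        = (μ+1) * (Real.log (Nf (ν+1) (r^2)) - Real.log (Nf (ν+1) 0)) := by
      field_simp
    linarith [h, e.le, e.ge]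
  have h6 := mul_le_mul_of_nonneg_left hab h2
  nlinarith [key3, h6]
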